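/- Let 1 ≤ p < ∞ and let B_u, B_v be the weighted backward shifts on ℓ_p(ℤ₊) associated with weight sequences u and v. Assume that ∑_{n=1}^∞ 1/|u₁⋯u_n|^p < ∞ and ∑_{n=1}^∞ 1/|v₁⋯v_n|^p < ∞. Then the following are equivalent: (1) B_u and B_v share a non-zero periodic point; (2) there exist d ∈ ℕ, d ≥ 1, and 0 ≤ j ≤ d−1 such that u_{1+j}⋯u_{dm+j} = v_{1+j}⋯v_{dm+j} for all m ≥ 1; (3) there exist d ∈ ℕ, d ≥ 1, 0 ≤ j ≤ d−1 and a non-zero scalar C such that u₁⋯u_{dm+j} = C · v₁⋯v_{dm+j} for all m ≥ 0 (where an empty product equals 1). -/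

import Mathlib

open MeasureTheory Filter
open scoped ENNReal NNReal

noncomputable instance {𝕂 : Type*} [RCLike 𝕂] {p : ℝ≥0∞} [Fact (1 ≤ p)] :
    MeasurableSpace (lp (fun _ : ℕ => 𝕂) p) := borel _

instance {𝕂 : Type*} [RCLike 𝕂] {p : ℝ≥0∞} [Fact (1 ≤ p)] :
    BorelSpace (lp (fun _ : ℕ => 𝕂) p) := ⟨rfl⟩

section Aux

variable {𝕂 : Type*} [RCLike 𝕂] {p : ℝ≥0∞} [Fact (1 ≤ p)]

/-- Splitting a product over `Icc (a+1) c` at an intermediate point `b`. -/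
private lemma prod_split (w : ℕ → 𝕂) {a b c : ℕ} (hab : a ≤ b) (hbc : b ≤ c) :
    ∏ i ∈ Finset.Icc (a + 1) c, w i =
      (∏ i ∈ Finset.Icc (a + 1) b, w i) * ∏ i ∈ Finset.Icc (b + 1) c, w i := by
  rw [Finset.Icc_add_one_left_eq_Ioc, Finset.Icc_add_one_left_eq_Ioc, Finset.Icc_add_one_left_eq_Ioc,
    Finset.prod_Ioc_consecutive w hab hbc]

private lemma prod_ne_zero {w : ℕ → 𝕂} (hw : ∀ n, 1 ≤ n → w n ≠ 0) (a b : ℕ) :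
    ∏ i ∈ Finset.Icc (a + 1) b, w i ≠ 0 :=
  Finset.prod_ne_zero_iff.mpr fun i hi =>
    hw i (le_trans (Nat.succ_le_succ (Nat.zero_le a)) (Finset.mem_Icc.mp hi).1)

private lemma prod_ne_zero' {w : ℕ → 𝕂} (hw : ∀ n, 1 ≤ n → w n ≠ 0) (b : ℕ) :
    ∏ i ∈ Finset.Icc 1 b, w i ≠ 0 := by
  simpa using prod_ne_zero hw 0 b

private lemma prod_inv_helper {w : ℕ → 𝕂} (hw : ∀ n, 1 ≤ n → w n ≠ 0) {j a b : ℕ}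
    (hja : j ≤ a) (hab : a ≤ b) :
    (∏ i ∈ Finset.Icc (a + 1) b, w i) * (∏ i ∈ Finset.Icc (j + 1) b, w i)⁻¹ =
      (∏ i ∈ Finset.Icc (j + 1) a, w i)⁻¹ := by
  rw [prod_split w hja hab, mul_inv, ← mul_assoc,
    mul_comm (∏ i ∈ Finset.Icc (a + 1) b, w i), mul_assoc,
    mul_inv_cancel₀ (prod_ne_zero hw a b), mul_one]

/-- Coordinates of powers of a weighted backward shift. -/
private lemma shift_pow_apply (w : ℕ → 𝕂)
    (B : lp (fun _ : ℕ => 𝕂) p →L[𝕂] lp (fun _ : ℕ => 𝕂) p)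
    (hB : ∀ (x : lp (fun _ : ℕ => 𝕂) p) (n : ℕ),
        (B x : ∀ _ : ℕ, 𝕂) n = w (n + 1) * (x : ∀ _ : ℕ, 𝕂) (n + 1)) :
    ∀ (k : ℕ) (x : lp (fun _ : ℕ => 𝕂) p) (n : ℕ),
      ((B ^ k) x : ∀ _ : ℕ, 𝕂) n =
        (∏ i ∈ Finset.Icc (n + 1) (n + k), w i) * (x : ∀ _ : ℕ, 𝕂) (n + k) := by
  intro k
  induction k with
  | zero =>
    intro x n
    simp [Finset.Icc_eq_empty (by omega : ¬ n + 1 ≤ n)]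
  | succ k ih =>
    intro x n
    have h1 : ((B ^ (k + 1)) x : ∀ _ : ℕ, 𝕂) n = ((B ^ k) (B x) : ∀ _ : ℕ, 𝕂) n := by
      rw [pow_succ, ContinuousLinearMap.mul_apply]
    rw [h1, ih (B x) n, hB x (n + k), show n + (k + 1) = n + k + 1 by omega,
      Finset.prod_Icc_succ_top (by omega : n + 1 ≤ n + k + 1) w]
    ring

private lemma fix_pow {E : Type*} [NormedAddCommGroup E] [NormedSpace 𝕂 E]
    (T : E →L[𝕂] E) (x : E) (h : T x = x) : ∀ k : ℕ, (T ^ k) x = x := by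
  intro k
  induction k with
  | zero => simp
  | succ k ih => rw [pow_succ, ContinuousLinearMap.mul_apply, h, ih]

end Aux

/-- Under the summability conditions, `B_u` and `B_v` share a non-zero periodic
point iff there exist `d ≥ 1` and `0 ≤ j ≤ d-1` with `u_{1+j}⋯u_{dm+j} = v_{1+j}⋯v_{dm+j}` for
all `m ≥ 1`, iff there exist `d ≥ 1`, `0 ≤ j ≤ d-1` and `C ≠ 0` with
`u₁⋯u_{dm+j} = C·v₁⋯v_{dm+j}` for all `m ≥ 0`. -/
theorem common_periodic_point_iff
    {𝕂 : Type*} [RCLike 𝕂] (p : ℝ≥0∞) [Fact (1 ≤ p)] (hp : p ≠ ⊤)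
    (u v : ℕ → 𝕂) (hu0 : ∀ n, 1 ≤ n → u n ≠ 0) (hv0 : ∀ n, 1 ≤ n → v n ≠ 0)
    (hubdd : ∃ M : ℝ, ∀ n, ‖u n‖ ≤ M) (hvbdd : ∃ M : ℝ, ∀ n, ‖v n‖ ≤ M)
    (hsumu : Summable (fun n : ℕ =>
        (1 : ℝ) / ‖∏ i ∈ Finset.Icc 1 (n + 1), u i‖ ^ p.toReal))
    (hsumv : Summable (fun n : ℕ =>
        (1 : ℝ) / ‖∏ i ∈ Finset.Icc 1 (n + 1), v i‖ ^ p.toReal))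
    (Bu Bv : lp (fun _ : ℕ => 𝕂) p →L[𝕂] lp (fun _ : ℕ => 𝕂) p)
    (hBu : ∀ (x : lp (fun _ : ℕ => 𝕂) p) (n : ℕ),
        (Bu x : ∀ _ : ℕ, 𝕂) n = u (n + 1) * (x : ∀ _ : ℕ, 𝕂) (n + 1))
    (hBv : ∀ (x : lp (fun _ : ℕ => 𝕂) p) (n : ℕ),
        (Bv x : ∀ _ : ℕ, 𝕂) n = v (n + 1) * (x : ∀ _ : ℕ, 𝕂) (n + 1)) :
    ((∃ x : lp (fun _ : ℕ => 𝕂) p, x ≠ 0 ∧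
        (∃ d : ℕ, 1 ≤ d ∧ (Bu ^ d) x = x) ∧ (∃ d : ℕ, 1 ≤ d ∧ (Bv ^ d) x = x)) ↔
      (∃ d : ℕ, 1 ≤ d ∧ ∃ j : ℕ, j < d ∧ ∀ m : ℕ, 1 ≤ m →
        ∏ i ∈ Finset.Icc (j + 1) (d * m + j), u i =
          ∏ i ∈ Finset.Icc (j + 1) (d * m + j), v i)) ∧
    ((∃ d : ℕ, 1 ≤ d ∧ ∃ j : ℕ, j < d ∧ ∀ m : ℕ, 1 ≤ m →
        ∏ i ∈ Finset.Icc (j + 1) (d * m + j), u i =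
          ∏ i ∈ Finset.Icc (j + 1) (d * m + j), v i) ↔
      (∃ d : ℕ, 1 ≤ d ∧ ∃ j : ℕ, j < d ∧ ∃ C : 𝕂, C ≠ 0 ∧ ∀ m : ℕ,
        ∏ i ∈ Finset.Icc 1 (d * m + j), u i =
          C * ∏ i ∈ Finset.Icc 1 (d * m + j), v i)) := by
  classical
  have hpr : 0 < p.toReal :=
    ENNReal.toReal_pos (fun h => by simpa [h] using (Fact.out : (1:ℝ≥0∞) ≤ p)) hp
  constructor
  · constructor
    · -- (1) → (2)
      rintro ⟨x, hx0, ⟨d1, hd1, h1⟩, ⟨d2, hd2, h2⟩⟩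
      obtain ⟨n, hn⟩ : ∃ n, (x : ∀ _ : ℕ, 𝕂) n ≠ 0 := by
        by_contra h
        push_neg at h
        exact hx0 (lp.eq_zero_iff_coeFn_eq_zero.mpr (funext h))
      set d : ℕ := d1 * d2 * (n + 1) with hddef
      have hd' : n + 1 ≤ d :=
        Nat.le_mul_of_pos_left _ (Nat.mul_pos hd1 hd2)
      have hd : 1 ≤ d := by omega
      have hfixu : (Bu ^ d) x = x := by
        rw [show d = d1 * (d2 * (n + 1)) by ring, pow_mul]
        exact fix_pow _ _ h1 _
      have hfixv : (Bv ^ d) x = x := by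
        rw [show d = d2 * (d1 * (n + 1)) by ring, pow_mul]
        exact fix_pow _ _ h2 _
      have hstep : ∀ (w : ℕ → 𝕂) (B : lp (fun _ : ℕ => 𝕂) p →L[𝕂] lp (fun _ : ℕ => 𝕂) p),
          (∀ (y : lp (fun _ : ℕ => 𝕂) p) (k : ℕ),
            (B y : ∀ _ : ℕ, 𝕂) k = w (k + 1) * (y : ∀ _ : ℕ, 𝕂) (k + 1)) →
          (B ^ d) x = x →
          ∀ m : ℕ, (∏ i ∈ Finset.Icc (n + 1) (n + d * m), w i) *
            (x : ∀ _ : ℕ, 𝕂) (n + d * m) = (x : ∀ _ : ℕ, 𝕂) n := by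
        intro w B hB hfix m
        induction m with
        | zero => simp [Finset.Icc_eq_empty (by omega : ¬ n + 1 ≤ n)]
        | succ m ih =>
          have key : ((B ^ d) x : ∀ _ : ℕ, 𝕂) (n + d * m) =
              (∏ i ∈ Finset.Icc (n + d * m + 1) (n + d * m + d), w i) *
                (x : ∀ _ : ℕ, 𝕂) (n + d * m + d) := shift_pow_apply w B hB d x (n + d * m)
          rw [hfix] at key
          have hsplit : ∏ i ∈ Finset.Icc (n + 1) (n + d * (m + 1)), w i =
              (∏ i ∈ Finset.Icc (n + 1) (n + d * m), w i) *
                ∏ i ∈ Finset.Icc (n + d * m + 1) (n + d * m + d), w i := by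
            rw [show n + d * (m + 1) = n + d * m + d by ring]
            exact prod_split w (by omega) (by omega)
          rw [hsplit, show n + d * (m + 1) = n + d * m + d by ring, mul_assoc, ← key, ih]
      have hxu := hstep u Bu hBu hfixu
      have hxv := hstep v Bv hBv hfixv
      refine ⟨d, hd, n, by omega, fun m _ => ?_⟩
      have hprodu := hxu m
      have hprodv := hxv m
      have hxc : (x : ∀ _ : ℕ, 𝕂) (n + d * m) ≠ 0 := by
        intro h
        rw [h, mul_zero] at hprodu
        exact hn hprodu.symm
      have : (∏ i ∈ Finset.Icc (n + 1) (n + d * m), u i) =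
          ∏ i ∈ Finset.Icc (n + 1) (n + d * m), v i :=
        mul_right_cancel₀ hxc (hprodu.trans hprodv.symm)
      rw [show d * m + n = n + d * m by ring]
      exact this
    · -- (2) → (1)
      rintro ⟨d, hd, j, hjd, hw⟩
      set f : ℕ → 𝕂 := fun n =>
        if ∃ m : ℕ, n = d * m + j then (∏ i ∈ Finset.Icc (j + 1) n, u i)⁻¹ else 0 with hfdef
      have hf_eq : ∀ m : ℕ, f (d * m + j) = (∏ i ∈ Finset.Icc (j + 1) (d * m + j), u i)⁻¹ := by
        intro m
        simp only [hfdef]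
        rw [if_pos ⟨m, rfl⟩]
      have hw' : ∀ m : ℕ, ∏ i ∈ Finset.Icc (j + 1) (d * m + j), u i =
          ∏ i ∈ Finset.Icc (j + 1) (d * m + j), v i := by
        intro m
        match m with
        | 0 => simp [Finset.Icc_eq_empty (by omega : ¬ j + 1 ≤ d * 0 + j)]
        | (m + 1) => exact hw (m + 1) (by omega)
      have hf_eqv : ∀ m : ℕ, f (d * m + j) = (∏ i ∈ Finset.Icc (j + 1) (d * m + j), v i)⁻¹ := by
        intro m
        rw [hf_eq m, hw' m]
      have hf0 : ∀ n, (¬ ∃ m : ℕ, n = d * m + j) → f n = 0 := by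
        intro n hn
        simp only [hfdef]
        rw [if_neg hn]
      -- Membership in ℓ^p
      have hfmem : Memℓp f p := by
        apply memℓp_gen
        set i : ℕ → ℕ := fun m => d * m + j with hidef
        have hi : Function.Injective i := by
          intro a b hab
          simp only [hidef] at hab
          have : d * a = d * b := by omega
          exact Nat.eq_of_mul_eq_mul_left (by omega) this
        have hvan : ∀ n ∉ Set.range i, ‖f n‖ ^ p.toReal = 0 := by
          intro n hn
          have : ¬ ∃ m : ℕ, n = d * m + j := by
            rintro ⟨m, rfl⟩
            exact hn ⟨m, rfl⟩
          rw [hf0 n this, norm_zero, Real.zero_rpow hpr.ne']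
        rw [← Function.Injective.summable_iff hi hvan]
        have hshift : Summable (fun m => ‖(f ∘ i) (m + 1)‖ ^ p.toReal) →
            Summable (fun m => ‖(f ∘ i) m‖ ^ p.toReal) :=
          (summable_nat_add_iff (f := fun m => ‖(f ∘ i) m‖ ^ p.toReal) 1).mp
        apply hshift
        -- now sum over m of the term at index d*(m+1)+j
        set e : ℕ → ℕ := fun m => d * m + (d + j - 1) with hedef
        have he1 : ∀ m, e m + 1 = d * (m + 1) + j := by
          intro m
          simp only [hedef]
          rw [Nat.mul_succ]
          omega
        have he : Function.Injective e := by
          intro a b hab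
          have h2 : d * (a + 1) + j = d * (b + 1) + j := by rw [← he1 a, ← he1 b, hab]
          have : d * (a + 1) = d * (b + 1) := by omega
          have := Nat.eq_of_mul_eq_mul_left (by omega : 0 < d) this
          omega
        have hcomp : Summable (fun m : ℕ =>
            (1 : ℝ) / ‖∏ l ∈ Finset.Icc 1 (e m + 1), u l‖ ^ p.toReal) :=
          hsumu.comp_injective he
        have haj : (0:ℝ) < ‖∏ l ∈ Finset.Icc 1 j, u l‖ :=
          norm_pos_iff.mpr (prod_ne_zero' hu0 j)
        have heq : (fun m : ℕ => ‖(f ∘ i) (m + 1)‖ ^ p.toReal) =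
            fun m : ℕ => ‖∏ l ∈ Finset.Icc 1 j, u l‖ ^ p.toReal *
              ((1 : ℝ) / ‖∏ l ∈ Finset.Icc 1 (e m + 1), u l‖ ^ p.toReal) := by
          funext m
          have hN : e m + 1 = d * (m + 1) + j := he1 m
          have hiv : (f ∘ i) (m + 1) = (∏ l ∈ Finset.Icc (j + 1) (d * (m + 1) + j), u l)⁻¹ :=
            hf_eq (m + 1)
          rw [hiv, hN]
          have hsplit : ∏ l ∈ Finset.Icc 1 (d * (m + 1) + j), u l =
              (∏ l ∈ Finset.Icc 1 j, u l) *
                ∏ l ∈ Finset.Icc (j + 1) (d * (m + 1) + j), u l := by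
            simpa using prod_split u (Nat.zero_le j) (by omega : j ≤ d * (m + 1) + j)
          rw [norm_inv, hsplit, norm_mul]
          have hb : (0:ℝ) < ‖∏ l ∈ Finset.Icc (j + 1) (d * (m + 1) + j), u l‖ :=
            norm_pos_iff.mpr (prod_ne_zero hu0 j (d * (m + 1) + j))
          rw [Real.mul_rpow (le_of_lt haj) (le_of_lt hb),
            Real.inv_rpow (le_of_lt hb)]
          have haj' : ‖∏ l ∈ Finset.Icc 1 j, u l‖ ^ p.toReal ≠ 0 :=
            (Real.rpow_pos_of_pos haj _).ne'
          have hb' : ‖∏ l ∈ Finset.Icc (j + 1) (d * (m + 1) + j), u l‖ ^ p.toReal ≠ 0 :=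
            (Real.rpow_pos_of_pos hb _).ne'
          field_simp
        rw [heq]
        exact hcomp.mul_left _
      set x : lp (fun _ : ℕ => 𝕂) p := ⟨f, hfmem⟩ with hxdef
      have hxcoe : (x : ∀ _ : ℕ, 𝕂) = f := rfl
      have hfj : f j = 1 := by
        have : f (d * 0 + j) = (∏ i ∈ Finset.Icc (j + 1) (d * 0 + j), u i)⁻¹ := hf_eq 0
        simpa [Finset.Icc_eq_empty (by omega : ¬ j + 1 ≤ d * 0 + j)] using this
      have hx0 : x ≠ 0 := by
        intro h
        have := congrFun (lp.eq_zero_iff_coeFn_eq_zero.mp h) j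
        rw [hxcoe, hfj] at this
        exact one_ne_zero this
      -- periodicity: for both shifts
      have hper : ∀ (w : ℕ → 𝕂) (B : lp (fun _ : ℕ => 𝕂) p →L[𝕂] lp (fun _ : ℕ => 𝕂) p),
          (∀ (y : lp (fun _ : ℕ => 𝕂) p) (k : ℕ),
            (B y : ∀ _ : ℕ, 𝕂) k = w (k + 1) * (y : ∀ _ : ℕ, 𝕂) (k + 1)) →
          (∀ n, 1 ≤ n → w n ≠ 0) →
          (∀ m : ℕ, f (d * m + j) = (∏ i ∈ Finset.Icc (j + 1) (d * m + j), w i)⁻¹) →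
          (B ^ d) x = x := by
        intro w B hB hw0 hfw
        apply lp.ext
        funext n
        rw [shift_pow_apply w B hB d x n, hxcoe]
        by_cases hn : ∃ m : ℕ, n = d * m + j
        · obtain ⟨m, rfl⟩ := hn
          have hnd : d * m + j + d = d * (m + 1) + j := by ring
          rw [hnd, hfw (m + 1), hfw m, ← hnd]
          exact prod_inv_helper hw0 (by omega) (by omega)
        · have h2 : ¬ ∃ m : ℕ, n + d = d * m + j := by
            rintro ⟨m, hm⟩
            match m with
            | 0 => omega
            | (k + 1) =>
              rw [Nat.mul_succ] at hm
              exact hn ⟨k, by omega⟩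
          rw [hf0 _ hn, hf0 _ h2, mul_zero]
      exact ⟨x, hx0, ⟨d, hd, hper u Bu hBu hu0 hf_eq⟩, ⟨d, hd, hper v Bv hBv hv0 hf_eqv⟩⟩
  · -- (2) ↔ (3)
    constructor
    · rintro ⟨d, hd, j, hjd, h⟩
      have hPu : ∏ i ∈ Finset.Icc 1 j, u i ≠ 0 := prod_ne_zero' hu0 j
      have hPv : ∏ i ∈ Finset.Icc 1 j, v i ≠ 0 := prod_ne_zero' hv0 j
      refine ⟨d, hd, j, hjd,
        (∏ i ∈ Finset.Icc 1 j, u i) * (∏ i ∈ Finset.Icc 1 j, v i)⁻¹,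
        mul_ne_zero hPu (inv_ne_zero hPv), fun m => ?_⟩
      have h' : ∏ i ∈ Finset.Icc (j + 1) (d * m + j), u i =
          ∏ i ∈ Finset.Icc (j + 1) (d * m + j), v i := by
        match m with
        | 0 => simp [Finset.Icc_eq_empty (by omega : ¬ j + 1 ≤ d * 0 + j)]
        | (m + 1) => exact h (m + 1) (by omega)
      have hsu : ∏ i ∈ Finset.Icc 1 (d * m + j), u i =
          (∏ i ∈ Finset.Icc 1 j, u i) * ∏ i ∈ Finset.Icc (j + 1) (d * m + j), u i := by
        simpa using prod_split u (Nat.zero_le j) (by omega : j ≤ d * m + j)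
      have hsv : ∏ i ∈ Finset.Icc 1 (d * m + j), v i =
          (∏ i ∈ Finset.Icc 1 j, v i) * ∏ i ∈ Finset.Icc (j + 1) (d * m + j), v i := by
        simpa using prod_split v (Nat.zero_le j) (by omega : j ≤ d * m + j)
      rw [hsu, hsv, h']
      field_simp
    · rintro ⟨d, hd, j, hjd, C, hC, h⟩
      refine ⟨d, hd, j, hjd, fun m _ => ?_⟩
      have h0 := h 0
      rw [show d * 0 + j = j by ring] at h0
      have hm := h m
      have hsu : ∏ i ∈ Finset.Icc 1 (d * m + j), u i =
          (∏ i ∈ Finset.Icc 1 j, u i) * ∏ i ∈ Finset.Icc (j + 1) (d * m + j), u i := by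
        simpa using prod_split u (Nat.zero_le j) (by omega : j ≤ d * m + j)
      have hsv : ∏ i ∈ Finset.Icc 1 (d * m + j), v i =
          (∏ i ∈ Finset.Icc 1 j, v i) * ∏ i ∈ Finset.Icc (j + 1) (d * m + j), v i := by
        simpa using prod_split v (Nat.zero_le j) (by omega : j ≤ d * m + j)
      rw [hsu, hsv, h0] at hm
      have hPv : ∏ i ∈ Finset.Icc 1 j, v i ≠ 0 := prod_ne_zero' hv0 j
      have hkey : C * (∏ i ∈ Finset.Icc 1 j, v i) ≠ 0 := mul_ne_zero hC hPv
      apply mul_left_cancel₀ hkey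
      rw [mul_assoc] at hm ⊢
      rw [hm]
      ring
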